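/- arXiv:0903.2575 — 2 statements merged into one kernel-verified Lean document; each statement's English description precedes it below -/
import Mathlib

section
/- In a cobweb poset with level sequence F, the Möbius function satisfies: for x ∈ Φ_r and y ∈ Φ_s with r < s, μ(x,y) = (-1)^{s-r} · ∏_{i=r+1}^{s-1} (i_F - 1), and μ(x,x) = 1. -/
/-- The cobweb poset with level sequence `F`, truncated to levels `0,…,n-1`:
level `k` has `F k` elements, and `x ≤ y` iff `x = y` or `x` lies on a strictly
lower level than `y`. -/
def Cobweb (F : ℕ → ℕ) (n : ℕ) := Σ k : Fin n, Fin (F k)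

namespace Cobweb

variable {F : ℕ → ℕ} {n : ℕ}

instance : Fintype (Cobweb F n) := inferInstanceAs (Fintype (Σ k : Fin n, Fin (F k)))
instance : DecidableEq (Cobweb F n) := inferInstanceAs (DecidableEq (Σ k : Fin n, Fin (F k)))

/-- The level (rank) of an element of the cobweb poset. -/
def lvl (x : Cobweb F n) : ℕ := (show Σ k : Fin n, Fin (F k) from x).fst

instance : PartialOrder (Cobweb F n) where
  le x y := x = y ∨ x.lvl < y.lvl
  le_refl x := Or.inl rfl
  le_trans a b c hab hbc := by
    rcases hab with rfl | h
    · exact hbc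
    · rcases hbc with rfl | h'
      · exact Or.inr h
      · exact Or.inr (h.trans h')
  le_antisymm a b hab hba := by
    rcases hab with rfl | h
    · rfl
    · rcases hba with rfl | h'
      · rfl
      · exact absurd (h.trans h') (lt_irrefl _)

instance : DecidableRel (α := Cobweb F n) (· ≤ ·) :=
  fun x y => decidable_of_iff (x = y ∨ x.lvl < y.lvl) Iff.rfl

instance : DecidableRel (α := Cobweb F n) (· < ·) :=
  fun x y => decidable_of_iff (x ≤ y ∧ ¬ y ≤ x) lt_iff_le_not_ge.symm

end Cobweb

lemma Cobweb.le_iff' {F : ℕ → ℕ} {n : ℕ} {x y : Cobweb F n} :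
    x ≤ y ↔ x = y ∨ x.lvl < y.lvl := Iff.rfl

lemma Cobweb.lt_iff' {F : ℕ → ℕ} {n : ℕ} {x y : Cobweb F n} :
    x < y ↔ x.lvl < y.lvl := by
  constructor
  · rintro ⟨hle, hnle⟩
    rcases hle with rfl | h
    · exact absurd (le_refl x) hnle
    · exact h
  · intro h
    refine ⟨Or.inr h, ?_⟩
    rintro (rfl | h')
    · exact absurd h (lt_irrefl _)
    · exact absurd (h.trans h') (lt_irrefl _)

lemma cobweb_key (F : ℕ → ℕ) (r : ℕ) : ∀ s, r < s →
    (-1:ℤ)^(s-r) * ∏ i ∈ Finset.Ioo r s, ((F i:ℤ)-1)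
    = -(1 + ∑ i ∈ Finset.Ioo r s, (F i:ℤ) *
        ((-1)^(i-r) * ∏ j ∈ Finset.Ioo r i, ((F j:ℤ)-1))) := by
  intro s hs
  induction s, hs using Nat.le_induction with
  | base =>
    have : Finset.Ioo r (r+1) = ∅ := by ext i; simp
    simp [this]
  | succ s hs IH =>
    have hrs : r ≤ s := Nat.le_of_succ_le hs
    have hins : Finset.Ioo r (s+1) = insert s (Finset.Ioo r s) := by
      ext i; simp [Finset.mem_Ioo, Finset.mem_insert]; omega
    have hnot : s ∉ Finset.Ioo r s := by simp
    rw [hins, Finset.prod_insert hnot, Finset.sum_insert hnot,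
      Nat.succ_sub hrs, pow_succ]
    set T := ∑ i ∈ Finset.Ioo r s, (F i:ℤ) *
        ((-1)^(i-r) * ∏ j ∈ Finset.Ioo r i, ((F j:ℤ)-1)) with hT
    set P := ∏ j ∈ Finset.Ioo r s, ((F j:ℤ)-1) with hP
    have hg : (-1:ℤ)^(s-r) * P = -(1 + T) := IH
    nlinarith [hg]


theorem stmt6 (F : ℕ → ℕ) (hF : ∀ k, 0 < F k) (n : ℕ)
    (mu : Cobweb F n → Cobweb F n → ℤ)
    (hrefl : ∀ x, mu x x = 1)
    (hrec : ∀ x y : Cobweb F n, x < y →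
      mu x y = -∑ z ∈ Finset.univ.filter (fun z => x ≤ z ∧ z < y), mu x z) :
    ∀ x y : Cobweb F n, x.lvl < y.lvl →
      mu x y = (-1) ^ (y.lvl - x.lvl) *
        ∏ i ∈ Finset.Ioo x.lvl y.lvl, ((F i : ℤ) - 1) := by
  suffices H : ∀ s, ∀ x y : Cobweb F n, y.lvl = s → x.lvl < y.lvl →
      mu x y = (-1) ^ (y.lvl - x.lvl) *
        ∏ i ∈ Finset.Ioo x.lvl y.lvl, ((F i : ℤ) - 1) by
    exact fun x y h => H y.lvl x y rfl h
  intro s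
  induction s using Nat.strong_induction_on with
  | _ s IH =>
  intro x y hys hxy
  set r := x.lvl with hr
  have hxy' : x < y := Cobweb.lt_iff'.mpr hxy
  have hsn : s ≤ n := by
    have : y.lvl < n := (show Σ k : Fin n, Fin (F k) from y).fst.isLt
    omega
  set S : Finset (Cobweb F n) :=
    ((Finset.univ.filter (fun k : Fin n => r < (k : ℕ) ∧ (k : ℕ) < s)).sigma
      (fun k => (Finset.univ : Finset (Fin (F k))))) with hS
  have hmemS : ∀ z : Cobweb F n, z ∈ S ↔ r < z.lvl ∧ z.lvl < s := by
    intro z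
    have h1 : z ∈ S ↔ (show Σ k : Fin n, Fin (F k) from z).1 ∈
        Finset.univ.filter (fun k : Fin n => r < (k : ℕ) ∧ (k : ℕ) < s) :=
      ⟨fun h => (Finset.mem_sigma.mp h).1,
       fun h => Finset.mem_sigma.mpr ⟨h, Finset.mem_univ _⟩⟩
    rw [h1, Finset.mem_filter]
    exact ⟨fun h => h.2, fun h => ⟨Finset.mem_univ _, h⟩⟩
  have hsplit : Finset.univ.filter (fun z : Cobweb F n => x ≤ z ∧ z < y)
      = insert x S := by
    ext z
    rw [Finset.mem_insert, hmemS z]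
    simp only [Finset.mem_filter, Finset.mem_univ, true_and,
      Cobweb.le_iff', Cobweb.lt_iff']
    constructor
    · rintro ⟨(rfl | h1), h2⟩
      · exact Or.inl rfl
      · exact Or.inr ⟨h1, by omega⟩
    · rintro (rfl | ⟨h1, h2⟩)
      · exact ⟨Or.inl rfl, hxy⟩
      · exact ⟨Or.inr h1, by omega⟩
  have hxnot : x ∉ S := by
    rw [hmemS x]
    rintro ⟨h1, -⟩
    exact absurd h1 (lt_irrefl _)
  rw [hrec x y hxy', hsplit, Finset.sum_insert hxnot, hrefl]
  have hsig : (∑ z ∈ S, mu x z)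
      = ∑ k ∈ Finset.univ.filter (fun k : Fin n => r < (k : ℕ) ∧ (k : ℕ) < s),
          ∑ b : Fin (F k), mu x (show Cobweb F n from ⟨k, b⟩) :=
    Finset.sum_sigma _ _ _
  have hinner : ∀ k ∈ Finset.univ.filter (fun k : Fin n => r < (k : ℕ) ∧ (k : ℕ) < s),
      (∑ b : Fin (F k), mu x (show Cobweb F n from ⟨k, b⟩))
      = (F k : ℤ) * ((-1)^((k : ℕ) - r) * ∏ j ∈ Finset.Ioo r (k : ℕ), ((F j:ℤ)-1)) := by
    intro k hk
    simp only [Finset.mem_filter, Finset.mem_univ, true_and] at hk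
    have hmu : ∀ b : Fin (F k), mu x (show Cobweb F n from ⟨k, b⟩)
        = (-1)^((k : ℕ) - r) * ∏ j ∈ Finset.Ioo r (k : ℕ), ((F j:ℤ)-1) := by
      intro b
      exact IH (k : ℕ) hk.2 x (show Cobweb F n from ⟨k, b⟩) rfl hk.1
    rw [Finset.sum_congr rfl (fun b _ => hmu b), Finset.sum_const,
      Finset.card_univ, Fintype.card_fin, nsmul_eq_mul]
  rw [hsig, Finset.sum_congr rfl hinner]
  have hconv : ∑ k ∈ Finset.univ.filter (fun k : Fin n => r < (k : ℕ) ∧ (k : ℕ) < s),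
        (F (k : ℕ) : ℤ) * ((-1)^((k : ℕ) - r) * ∏ j ∈ Finset.Ioo r (k : ℕ), ((F j:ℤ)-1))
      = ∑ i ∈ Finset.Ioo r s,
        (F i : ℤ) * ((-1)^(i - r) * ∏ j ∈ Finset.Ioo r i, ((F j:ℤ)-1)) := by
    rw [Finset.sum_filter,
      Fin.sum_univ_eq_sum_range (fun i => if r < i ∧ i < s then
        (F i : ℤ) * ((-1)^(i - r) * ∏ j ∈ Finset.Ioo r i, ((F j:ℤ)-1)) else 0) n,
      ← Finset.sum_filter]
    apply Finset.sum_congr _ (fun _ _ => rfl)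
    ext i
    simp only [Finset.mem_filter, Finset.mem_range, Finset.mem_Ioo]
    omega
  rw [hconv, hys, cobweb_key F r s (by omega)]
end

section
/- In a cobweb poset with level sequence F, the zeta matrix ζ (as a 0-1 matrix indexed by poset elements, ζ(x,y) = 1 iff x ≤ y) is the inverse of the Möbius matrix μ given by: μ(x,y) = [x=y] - [level(y)=level(x)+1] + [level(y)>level(x)+1]·(-1)^{level(y)-level(x)}·∏_{i=level(x)+1}^{level(y)-1}(i_F - 1); that is, ∑_{z} ζ(x,z)·μ(z,y) = [x=y] for all x, y in any finite truncation of the poset. -/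
def Gm (F : ℕ → ℕ) (b k : ℕ) : ℤ :=
  (-1) ^ (b - k) * ∏ i ∈ Finset.Ioo k b, ((F i : ℤ) - 1)

lemma Gm_rec (F : ℕ → ℕ) {b k : ℕ} (h : k + 1 < b) :
    Gm F b k = Gm F b (k + 1) - (F (k + 1) : ℤ) * Gm F b (k + 1) := by
  unfold Gm
  have hins : Finset.Ioo k b = insert (k + 1) (Finset.Ioo (k + 1) b) := by
    rw [Finset.Ioo_insert_left h, Finset.Ico_add_one_left_eq_Ioo]
  rw [hins, Finset.prod_insert (by simp)]
  have hbk : b - k = (b - (k + 1)) + 1 := by omega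
  rw [hbk]
  ring

lemma Gm_key (F : ℕ → ℕ) : ∀ d a b : ℕ, b = a + d + 1 →
    Gm F b a + ∑ k ∈ Finset.Ioo a b, (F k : ℤ) * Gm F b k = -1 := by
  intro d
  induction d with
  | zero =>
    intro a b hb
    subst hb
    have he : Finset.Ioo a (a + 1) = ∅ :=
      Finset.eq_empty_of_forall_notMem (by intro k hk; simp at hk; omega)
    simp [Gm, he]
  | succ d ih =>
    intro a b hb
    have h1 : a + 1 < b := by omega
    have hins : Finset.Ioo a b = insert (a + 1) (Finset.Ioo (a + 1) b) := by
      rw [Finset.Ioo_insert_left h1, Finset.Ico_add_one_left_eq_Ioo]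
    rw [hins, Finset.sum_insert (by simp), Gm_rec F h1]
    have := ih (a + 1) b (by omega)
    linarith

/-- `Rl F b k` : the level-dependent part of the Möbius matrix entry. -/
def Rl (F : ℕ → ℕ) (b k : ℕ) : ℤ :=
  -(if k + 1 = b then 1 else 0) +
    (if k + 1 < b then (-1) ^ (b - k) * ∏ i ∈ Finset.Ioo k b, ((F i : ℤ) - 1) else 0)

lemma Rl_eq_Gm (F : ℕ → ℕ) {b k : ℕ} (h : k < b) : Rl F b k = Gm F b k := by
  unfold Rl Gm
  rcases eq_or_lt_of_le (Nat.succ_le_of_lt h) with h1 | h1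
  · have he : Finset.Ioo k b = ∅ :=
      Finset.eq_empty_of_forall_notMem (by intro j hj; simp at hj; omega)
    have hb : b - k = 1 := by omega
    rw [if_pos h1, if_neg (by omega), hb, he]
    simp
  · rw [if_neg (by omega), if_pos h1]; ring

lemma Rl_zero (F : ℕ → ℕ) {b k : ℕ} (h : b ≤ k) : Rl F b k = 0 := by
  unfold Rl
  rw [if_neg (by omega), if_neg (by omega)]
  ring

/-- The zeta matrix of a cobweb poset is inverse to the explicitly given Möbius matrix:
`∑_z ζ(x,z)·μ(z,y) = [x = y]`. -/
theorem stmt10 (F : ℕ → ℕ) (hF : ∀ k, 0 < F k) (n : ℕ) :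
    ∀ x y : Cobweb F n,
      (∑ z : Cobweb F n,
        (if x ≤ z then (1 : ℤ) else 0) *
          ((if z = y then (1 : ℤ) else 0) - (if z.lvl + 1 = y.lvl then 1 else 0) +
            (if z.lvl + 1 < y.lvl then
              (-1) ^ (y.lvl - z.lvl) * ∏ i ∈ Finset.Ioo z.lvl y.lvl, ((F i : ℤ) - 1)
            else 0))) = if x = y then 1 else 0 := by
  intro x y
  have hle : ∀ u v : Cobweb F n, u ≤ v ↔ u = v ∨ u.lvl < v.lvl := fun u v => Iff.rfl
  by_cases hab : x.lvl < y.lvl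
  · -- main case
    have hxy : x ≠ y := fun h => absurd hab (by rw [h]; exact lt_irrefl _)
    rw [if_neg hxy]
    have hterm : ∀ z : Cobweb F n,
        (if x ≤ z then (1 : ℤ) else 0) *
          ((if z = y then (1 : ℤ) else 0) - (if z.lvl + 1 = y.lvl then 1 else 0) +
            (if z.lvl + 1 < y.lvl then
              (-1) ^ (y.lvl - z.lvl) * ∏ i ∈ Finset.Ioo z.lvl y.lvl, ((F i : ℤ) - 1)
            else 0)) =
        (if z = y then (if x ≤ z then (1 : ℤ) else 0) else 0) +
          ((if z = x then Rl F y.lvl z.lvl else 0) +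
            (if x.lvl < z.lvl then Rl F y.lvl z.lvl else 0)) := by
      intro z
      by_cases h1 : z = x
      · subst h1
        have h2 : ¬ z.lvl < z.lvl := lt_irrefl _
        have h3 : z ≠ y := hxy
        rw [if_pos (le_refl z), if_neg h3, if_pos rfl, if_neg h2]
        unfold Rl; ring
      · by_cases h2 : x.lvl < z.lvl
        · have hxz : x ≤ z := Or.inr h2
          rw [if_pos hxz, if_neg h1, if_pos h2]
          by_cases h3 : z = y
          · rw [if_pos h3]; unfold Rl; ring
          · rw [if_neg h3]; unfold Rl; ring
        · have hxz : ¬ x ≤ z := fun h => by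
            rcases (hle x z).1 h with h | h
            · exact h1 h.symm
            · exact h2 h
          rw [if_neg hxz, if_neg h1, if_neg h2, zero_mul]
          simp
    rw [Finset.sum_congr rfl (fun z _ => hterm z), Finset.sum_add_distrib,
      Finset.sum_add_distrib]
    have hxley : x ≤ y := Or.inr hab
    have hs1 : (∑ z : Cobweb F n, if z = y then (if x ≤ z then (1 : ℤ) else 0) else 0) = 1 := by
      rw [Finset.sum_ite_eq' Finset.univ y (fun z => if x ≤ z then (1 : ℤ) else 0)]
      simp [hxley]
    have hs2 : (∑ z : Cobweb F n, if z = x then Rl F y.lvl z.lvl else 0) = Rl F y.lvl x.lvl := by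
      rw [Finset.sum_ite_eq' Finset.univ x (fun z => Rl F y.lvl z.lvl)]
      simp
    have hs3 : (∑ z : Cobweb F n, if x.lvl < z.lvl then Rl F y.lvl z.lvl else 0) =
        ∑ k ∈ Finset.Ioo x.lvl y.lvl, (F k : ℤ) * Gm F y.lvl k := by
      have e1 : (∑ z : Cobweb F n, if x.lvl < z.lvl then Rl F y.lvl z.lvl else 0) =
          ∑ k : Fin n, ∑ j : Fin (F k), (if x.lvl < (k : ℕ) then Rl F y.lvl k else 0) := by
        rw [show (∑ z : Cobweb F n, if x.lvl < z.lvl then Rl F y.lvl z.lvl else 0) =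
            ∑ z : (Σ k : Fin n, Fin (F k)),
              (if x.lvl < (z.1 : ℕ) then Rl F y.lvl z.1 else 0) from rfl]
        rw [← Finset.univ_sigma_univ, Finset.sum_sigma]
      rw [e1]
      have e2 : ∀ k : Fin n,
          (∑ _j : Fin (F k), (if x.lvl < (k : ℕ) then Rl F y.lvl k else 0)) =
            (F k : ℤ) * (if x.lvl < (k : ℕ) then Rl F y.lvl k else 0) := by
        intro k
        rw [Finset.sum_const, Finset.card_univ, Fintype.card_fin, nsmul_eq_mul]
      rw [Finset.sum_congr rfl (fun k _ => e2 k), Fin.sum_univ_eq_sum_range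
        (fun k => (F k : ℤ) * (if x.lvl < k then Rl F y.lvl k else 0)) n]
      have hbn : y.lvl < n := y.1.isLt
      have hsub : Finset.Ioo x.lvl y.lvl ⊆ Finset.range n := by
        intro k hk
        simp only [Finset.mem_Ioo] at hk
        simp only [Finset.mem_range]
        omega
      have hzero : ∀ k ∈ Finset.range n, k ∉ Finset.Ioo x.lvl y.lvl →
          (F k : ℤ) * (if x.lvl < k then Rl F y.lvl k else 0) = 0 := by
        intro k _ hk2
        simp only [Finset.mem_Ioo, not_and, not_lt] at hk2
        by_cases h : x.lvl < k
        · rw [if_pos h, Rl_zero F (hk2 h), mul_zero]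
        · rw [if_neg h, mul_zero]
      rw [← Finset.sum_subset hsub hzero]
      apply Finset.sum_congr rfl
      intro k hk
      simp only [Finset.mem_Ioo] at hk
      rw [if_pos hk.1, Rl_eq_Gm F hk.2]
    rw [hs1, hs2, hs3, Rl_eq_Gm F hab]
    have hkey := Gm_key F (y.lvl - x.lvl - 1) x.lvl y.lvl (by omega)
    linarith
  · -- y.lvl ≤ x.lvl
    by_cases hxy : x = y
    · subst hxy
      rw [if_pos rfl, Fintype.sum_eq_single x]
      · have h2 : ¬ x.lvl + 1 = x.lvl := by omega
        have h3 : ¬ x.lvl + 1 < x.lvl := by omega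
        rw [if_pos (le_refl x), if_pos rfl, if_neg h2, if_neg h3]
        ring
      · intro z hz
        by_cases hxz : x ≤ z
        · have hlt : x.lvl < z.lvl := ((hle x z).1 hxz).resolve_left (fun h => hz h.symm)
          have h2 : z ≠ x := hz
          have h3 : ¬ z.lvl + 1 = x.lvl := by omega
          have h4 : ¬ z.lvl + 1 < x.lvl := by omega
          rw [if_pos hxz, if_neg h2, if_neg h3, if_neg h4]
          ring
        · rw [if_neg hxz, zero_mul]
    · rw [if_neg hxy]
      apply Finset.sum_eq_zero
      intro z _
      by_cases hxz : x ≤ z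
      · have hge : y.lvl ≤ z.lvl := by
          rcases (hle x z).1 hxz with h | h
          · rw [← h]; omega
          · omega
        have h2 : z ≠ y := fun h => by
          subst h
          rcases (hle x z).1 hxz with h | h
          · exact hxy h
          · exact hab h
        have h3 : ¬ z.lvl + 1 = y.lvl := by omega
        have h4 : ¬ z.lvl + 1 < y.lvl := by omega
        rw [if_pos hxz, if_neg h2, if_neg h3, if_neg h4]
        ring
      · rw [if_neg hxz, zero_mul]
end
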